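/- Let ε₀ > 0, C₀ > 0, and δ₀ ∈ (0,1). Then there exists p₀ ∈ (0,1), depending only on ε₀, C₀, δ₀, such that for every real-valued random variable ξ with mean zero, variance one, and E|ξ|^{2+ε₀} ≤ C₀, and every real number α, one has P(|ξ - α| ≤ δ₀) ≤ 1 - p₀. -/

import Mathlib

open MeasureTheory

private lemma ptwise_bound (ε₀ M x : ℝ) (hε : 0 < ε₀) (hM : 1 ≤ M) :
    x ^ 2 ≤ M ^ 2 + |x| ^ (2 + ε₀) / M ^ ε₀ := by
  have hM0 : (0:ℝ) < M := lt_of_lt_of_le one_pos hM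
  have hMεpos : (0:ℝ) < M ^ ε₀ := Real.rpow_pos_of_pos hM0 _
  rcases le_or_gt |x| M with h | h
  · have h1 : x ^ 2 ≤ M ^ 2 := by nlinarith [abs_nonneg x, sq_abs x]
    have h2 : (0:ℝ) ≤ |x| ^ (2 + ε₀) / M ^ ε₀ := by positivity
    linarith
  · have hx0 : (0:ℝ) < |x| := lt_of_le_of_lt (by linarith) h
    have hsplit : |x| ^ (2 + ε₀) = x ^ 2 * |x| ^ ε₀ := by
      rw [Real.rpow_add hx0, Real.rpow_two, sq_abs]
    have hε' : M ^ ε₀ ≤ |x| ^ ε₀ := Real.rpow_le_rpow hM0.le h.le hε.le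
    have : x ^ 2 ≤ |x| ^ (2 + ε₀) / M ^ ε₀ := by
      rw [le_div_iff₀ hMεpos, hsplit]
      nlinarith [sq_nonneg x]
    nlinarith [sq_nonneg M]

set_option maxHeartbeats 2000000 in
theorem stmt_2 (ε₀ C₀ δ₀ : ℝ) (hε₀ : 0 < ε₀) (hC₀ : 0 < C₀) (hδ₀ : δ₀ ∈ Set.Ioo (0:ℝ) 1) :
    ∃ p₀ ∈ Set.Ioo (0:ℝ) 1,
      ∀ (Ω : Type) (_ : MeasurableSpace Ω) (μ : Measure Ω), IsProbabilityMeasure μ →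
        ∀ ξ : Ω → ℝ, Measurable ξ →
        MemLp ξ (ENNReal.ofReal (2 + ε₀)) μ →
        (∫ ω, ξ ω ∂μ) = 0 →
        (∫ ω, (ξ ω) ^ 2 ∂μ) = 1 →
        (∫ ω, |ξ ω| ^ (2 + ε₀) ∂μ) ≤ C₀ →
        ∀ α : ℝ, (μ {ω | |ξ ω - α| ≤ δ₀}).toReal ≤ 1 - p₀ := by
  obtain ⟨hδ0, hδ1⟩ := hδ₀
  have hδsq : (0:ℝ) < 1 - δ₀ ^ 2 := by nlinarith
  set a : ℝ := 8 * C₀ / (1 - δ₀ ^ 2) with ha_def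
  have ha : 0 < a := by positivity
  set M : ℝ := max 1 (a ^ (1 / ε₀)) with hM_def
  have hM1 : (1:ℝ) ≤ M := le_max_left _ _
  have hM0 : (0:ℝ) < M := lt_of_lt_of_le one_pos hM1
  have hMεpos : (0:ℝ) < M ^ ε₀ := Real.rpow_pos_of_pos hM0 _
  have hCM : C₀ / M ^ ε₀ ≤ (1 - δ₀ ^ 2) / 8 := by
    have hMε : a ≤ M ^ ε₀ := by
      calc a = (a ^ (1/ε₀)) ^ ε₀ := by
            rw [← Real.rpow_mul ha.le, one_div_mul_cancel hε₀.ne', Real.rpow_one]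
        _ ≤ M ^ ε₀ := Real.rpow_le_rpow (Real.rpow_nonneg ha.le _) (le_max_right _ _) hε₀.le
    rw [div_le_div_iff₀ hMεpos (by norm_num)]
    have : a * (1 - δ₀ ^ 2) = 8 * C₀ := by rw [ha_def, div_mul_cancel₀ _ hδsq.ne']
    nlinarith
  set p₀ : ℝ := min (1/4) ((1 - δ₀ ^ 2) / (8 * M ^ 2)) with hp_def
  have hp_pos : 0 < p₀ := lt_min (by norm_num) (by positivity)
  have hp_quarter : p₀ ≤ 1/4 := min_le_left _ _
  have hp_M : M ^ 2 * p₀ ≤ (1 - δ₀ ^ 2) / 8 := by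
    have h := min_le_right (1/4 : ℝ) ((1 - δ₀ ^ 2) / (8 * M ^ 2))
    rw [le_div_iff₀ (by positivity)] at h
    nlinarith
  clear_value a M p₀
  refine ⟨p₀, ⟨hp_pos, by linarith⟩, ?_⟩
  intro Ω mΩ μ hμ ξ hξ hLp hmean hvar hmom α
  set A := {ω | |ξ ω - α| ≤ δ₀} with hA_def
  have hA : MeasurableSet A := measurableSet_le (hξ.sub measurable_const).abs measurable_const
  -- integrability facts
  have hp_eq : (ENNReal.ofReal (2 + ε₀)).toReal = 2 + ε₀ := ENNReal.toReal_ofReal (by linarith)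
  have hmom_int : Integrable (fun ω => |ξ ω| ^ (2 + ε₀)) μ := by
    have h := hLp.integrable_norm_rpow (by simp [ENNReal.ofReal_eq_zero]; linarith)
      ENNReal.ofReal_ne_top
    simpa [hp_eq, Real.norm_eq_abs] using h
  have hL2 : MemLp ξ 2 μ := by
    refine hLp.mono_exponent ?_
    rw [show (2:ENNReal) = ENNReal.ofReal 2 by simp]
    exact ENNReal.ofReal_le_ofReal (by linarith)
  have hint_sq : Integrable (fun ω => ξ ω ^ 2) μ := hL2.integrable_sq
  have hint : Integrable ξ μ := hL2.integrable (by norm_num)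
  have hf : Integrable (fun ω => (ξ ω - α) ^ 2) μ := by
    have h := (hL2.sub (memLp_const α)).integrable_sq
    simpa using h
  -- expectation of (ξ - α)^2
  have hEf : ∫ ω, (ξ ω - α) ^ 2 ∂μ = 1 + α ^ 2 := by
    have e : (fun ω => (ξ ω - α) ^ 2)
        = fun ω => (ξ ω ^ 2 - (2 * α) * ξ ω) + α ^ 2 := by
      funext ω; ring
    have i2 : Integrable (fun ω => 2 * α * ξ ω) μ := hint.const_mul (2 * α)
    have i1 : Integrable (fun ω => ξ ω ^ 2 - 2 * α * ξ ω) μ := hint_sq.sub i2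
    rw [e, integral_add i1 (integrable_const _), integral_sub hint_sq i2,
      integral_const_mul, hvar, hmean, integral_const]
    simp
  -- split the integral
  have hsplit : ∫ ω in A, (ξ ω - α) ^ 2 ∂μ + ∫ ω in Aᶜ, (ξ ω - α) ^ 2 ∂μ = 1 + α ^ 2 := by
    rw [integral_add_compl hA hf, hEf]
  set b : ℝ := (μ Aᶜ).toReal with hb_def
  have hb0 : 0 ≤ b := ENNReal.toReal_nonneg
  have hmuA1 : (μ A).toReal ≤ 1 := by
    calc (μ A).toReal ≤ (μ Set.univ).toReal :=
          ENNReal.toReal_mono (measure_ne_top μ _) (measure_mono (Set.subset_univ _))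
      _ = 1 := by simp
  -- bound on A
  have hbA : ∫ ω in A, (ξ ω - α) ^ 2 ∂μ ≤ δ₀ ^ 2 := by
    have h1 : ∫ ω in A, (ξ ω - α) ^ 2 ∂μ ≤ ∫ _ω in A, δ₀ ^ 2 ∂μ := by
      refine setIntegral_mono_on hf.integrableOn
        integrableOn_const hA ?_
      intro ω hω
      have hω' : |ξ ω - α| ≤ δ₀ := hω
      nlinarith [abs_nonneg (ξ ω - α), sq_abs (ξ ω - α)]
    have h2 : ∫ _ω in A, (δ₀ ^ 2 : ℝ) ∂μ = (μ A).toReal * δ₀ ^ 2 := by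
      rw [setIntegral_const]; simp [smul_eq_mul, Measure.real]
    nlinarith [sq_nonneg δ₀]
  -- bound on Aᶜ
  have hbB : ∫ ω in Aᶜ, (ξ ω - α) ^ 2 ∂μ
      ≤ 2 * (M ^ 2 * b + C₀ / M ^ ε₀) + 2 * α ^ 2 * b := by
    have hg1 : Integrable (fun ω => 2 * (M ^ 2 + |ξ ω| ^ (2 + ε₀) / M ^ ε₀)) μ :=
      ((integrable_const (M ^ 2)).add (hmom_int.div_const _)).const_mul 2
    have hg : Integrable (fun ω => 2 * (M ^ 2 + |ξ ω| ^ (2 + ε₀) / M ^ ε₀) + 2 * α ^ 2) μ :=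
      hg1.add (integrable_const _)
    have h1 : ∫ ω in Aᶜ, (ξ ω - α) ^ 2 ∂μ
        ≤ ∫ ω in Aᶜ, (2 * (M ^ 2 + |ξ ω| ^ (2 + ε₀) / M ^ ε₀) + 2 * α ^ 2) ∂μ := by
      refine setIntegral_mono hf.integrableOn hg.integrableOn ?_
      intro ω
      have hpt := ptwise_bound ε₀ M (ξ ω) hε₀ hM1
      have e1 : (ξ ω - α) ^ 2 ≤ 2 * ξ ω ^ 2 + 2 * α ^ 2 := by nlinarith [sq_nonneg (ξ ω + α)]
      linarith
    have h2 : ∫ ω in Aᶜ, |ξ ω| ^ (2 + ε₀) ∂μ ≤ C₀ :=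
      le_trans (setIntegral_le_integral hmom_int
        (Filter.Eventually.of_forall fun ω => by positivity)) hmom
    have h3 : ∫ ω in Aᶜ, (2 * (M ^ 2 + |ξ ω| ^ (2 + ε₀) / M ^ ε₀) + 2 * α ^ 2) ∂μ
        = 2 * (M ^ 2 * b + (∫ ω in Aᶜ, |ξ ω| ^ (2 + ε₀) ∂μ) / M ^ ε₀) + 2 * α ^ 2 * b := by
      rw [integral_add hg1.integrableOn (integrable_const _).integrableOn,
        integral_const_mul,
        integral_add (integrable_const _).integrableOn (hmom_int.div_const _).integrableOn,
        integral_div, setIntegral_const, setIntegral_const]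
      simp only [smul_eq_mul, Measure.real, ← hb_def]
      ring
    have h4 : (∫ ω in Aᶜ, |ξ ω| ^ (2 + ε₀) ∂μ) / M ^ ε₀ ≤ C₀ / M ^ ε₀ := by gcongr
    linarith
  -- conclude
  by_contra hcon
  push_neg at hcon
  have hsum : (μ A).toReal + b = 1 := by
    rw [hb_def, ← ENNReal.toReal_add (measure_ne_top μ _) (measure_ne_top μ _),
      measure_add_measure_compl hA]
    simp
  have hb_lt : b < p₀ := by linarith
  have hMb : M ^ 2 * b ≤ M ^ 2 * p₀ := by nlinarith [sq_nonneg M]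
  have hαb : α ^ 2 * b ≤ α ^ 2 * p₀ := mul_le_mul_of_nonneg_left hb_lt.le (sq_nonneg α)
  have hαp : α ^ 2 * p₀ ≤ α ^ 2 * (1/4) := mul_le_mul_of_nonneg_left hp_quarter (sq_nonneg α)
  nlinarith [sq_nonneg α]
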